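/- arXiv:1204.1688 — 7 statements merged into one kernel-verified Lean document; each statement's English description precedes it below -/
import Mathlib

section
/- Let p ∈ [0,1]^m and for a permutation π of {1,…,m} define R(π) = Σ_{i=1}^m (1/F(i)) · p_{π⁻¹(i)} · Π_{j=1}^{i-1} (1 - p_{π⁻¹(j)}), where F : ℕ → [1,∞) is strictly increasing. Then R(π) is maximized by any permutation that orders the items in decreasing order of p_i; i.e., if π sorts p in decreasing order (p_{π⁻¹(1)} ≥ p_{π⁻¹(2)} ≥ ⋯ ≥ p_{π⁻¹(m)}), then R(π) ≥ R(σ) for every permutation σ. -/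
open Finset

/-- The expected reciprocal rank reward of an ordering `π` under a cascade model:
`R(π) = ∑ i, (1/F(i)) p_{π⁻¹(i)} ∏_{j<i} (1 - p_{π⁻¹(j)})`, where `π.symm i` is the
item placed at position `i` (positions are 0-indexed; `F` is evaluated at `i+1`). -/
noncomputable def errReward (m : ℕ) (p : Fin m → ℝ) (F : ℕ → ℝ)
    (π : Equiv.Perm (Fin m)) : ℝ :=
  ∑ i : Fin m, (1 / F ((i : ℕ) + 1)) * p (π.symm i) *
    ∏ j ∈ Finset.Iio i, (1 - p (π.symm j))

/-- Abstract reward functional. -/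
noncomputable def errG (m : ℕ) (w f : Fin m → ℝ) : ℝ :=
  ∑ i : Fin m, w i * f i * ∏ j ∈ Finset.Iio i, (1 - f j)

/-- The set of inversions of `f`. -/
noncomputable def errInv (m : ℕ) (f : Fin m → ℝ) : Finset (Fin m × Fin m) :=
  Finset.univ.filter (fun x => x.1 < x.2 ∧ f x.1 < f x.2)

lemma err_swap_lt_swap {m : ℕ} (a b i j : Fin m) (hab : (a : ℕ) + 1 = b)
    (hij : i < j) (hne : ¬(i = a ∧ j = b)) :
    Equiv.swap a b i < Equiv.swap a b j := by
  rw [Fin.lt_def] at hij ⊢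
  rcases eq_or_ne i a with rfl | hia
  · have hjb : j ≠ b := fun h => hne ⟨rfl, h⟩
    have hja : (j : ℕ) ≠ (i : ℕ) := by omega
    rw [Equiv.swap_apply_left,
      Equiv.swap_apply_of_ne_of_ne (fun h => hja (congrArg Fin.val h))
        (fun h => hjb h)]
    have hjb' : (j : ℕ) ≠ (b : ℕ) := fun h => hjb (Fin.ext h)
    omega
  rcases eq_or_ne i b with rfl | hib
  · have hja : (j : ℕ) ≠ (a : ℕ) := by omega
    have hjb : (j : ℕ) ≠ (i : ℕ) := by omega
    rw [Equiv.swap_apply_right,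
      Equiv.swap_apply_of_ne_of_ne (fun h => hja (congrArg Fin.val h))
        (fun h => hjb (congrArg Fin.val h))]
    omega
  rw [Equiv.swap_apply_of_ne_of_ne hia hib]
  have hia' : (i : ℕ) ≠ (a : ℕ) := fun h => hia (Fin.ext h)
  have hib' : (i : ℕ) ≠ (b : ℕ) := fun h => hib (Fin.ext h)
  rcases eq_or_ne j a with rfl | hja
  · rw [Equiv.swap_apply_left]; omega
  rcases eq_or_ne j b with rfl | hjb
  · rw [Equiv.swap_apply_right]; omega
  rw [Equiv.swap_apply_of_ne_of_ne hja hjb]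
  omega

lemma err_inv_card_lt {m : ℕ} (f : Fin m → ℝ) (a b : Fin m)
    (hab : (a : ℕ) + 1 = b) (hfab : f a < f b) :
    (errInv m (f ∘ Equiv.swap a b)).card < (errInv m f).card := by
  have hab' : a < b := by rw [Fin.lt_def]; omega
  have hmem : (a, b) ∈ errInv m f := by simp [errInv, hab', hfab]
  have hmaps : ∀ x ∈ errInv m (f ∘ Equiv.swap a b),
      (Equiv.swap a b x.1, Equiv.swap a b x.2) ∈ (errInv m f).erase (a, b) := by
    rintro ⟨i, j⟩ hx
    simp only [errInv, Finset.mem_filter, Finset.mem_univ, true_and,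
      Function.comp_apply] at hx
    obtain ⟨hij, hflt⟩ := hx
    have hne : ¬(i = a ∧ j = b) := by
      rintro ⟨rfl, rfl⟩
      rw [Equiv.swap_apply_left, Equiv.swap_apply_right] at hflt
      exact absurd hfab (not_lt.2 hflt.le)
    refine Finset.mem_erase.2 ⟨?_, ?_⟩
    · intro h
      have h1 : i = b := by
        have := congrArg (Equiv.swap a b) (congrArg Prod.fst h)
        simpa [Equiv.swap_apply_self, Equiv.swap_apply_left] using this
      have h2 : j = a := by
        have := congrArg (Equiv.swap a b) (congrArg Prod.snd h)
        simpa [Equiv.swap_apply_self, Equiv.swap_apply_right] using this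
      rw [h1, h2] at hij
      exact absurd hab' (not_lt.2 hij.le)
    · simp only [errInv, Finset.mem_filter, Finset.mem_univ, true_and]
      exact ⟨err_swap_lt_swap a b i j hab hij hne, hflt⟩
  calc (errInv m (f ∘ Equiv.swap a b)).card
      ≤ ((errInv m f).erase (a, b)).card := by
        apply Finset.card_le_card_of_injOn _ hmaps
        intro x _ y _ h
        have h1 := congrArg (Equiv.swap a b) (congrArg Prod.fst h)
        have h2 := congrArg (Equiv.swap a b) (congrArg Prod.snd h)
        simp only [Equiv.swap_apply_self] at h1 h2
        exact Prod.ext h1 h2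
    _ < (errInv m f).card := Finset.card_erase_lt_of_mem hmem

lemma err_G_swap_le {m : ℕ} (w f : Fin m → ℝ) (hf1 : ∀ j, f j ≤ 1)
    (hw : ∀ i j : Fin m, i ≤ j → w j ≤ w i)
    (a b : Fin m) (hab : (a : ℕ) + 1 = b) (hfab : f a ≤ f b) :
    errG m w f ≤ errG m w (f ∘ Equiv.swap a b) := by
  set s := Equiv.swap a b with hs
  have hab' : a < b := by rw [Fin.lt_def]; omega
  have hsa : s a = b := Equiv.swap_apply_left a b
  have hsb : s b = a := Equiv.swap_apply_right a b
  have hsother : ∀ j : Fin m, j ≠ a → j ≠ b → s j = j := fun j h1 h2 =>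
    Equiv.swap_apply_of_ne_of_ne h1 h2
  have hwab : w b ≤ w a := hw a b hab'.le
  set P := ∏ j ∈ Finset.Iio a, (1 - f j) with hPdef
  have hPnn : 0 ≤ P := Finset.prod_nonneg fun j _ => by linarith [hf1 j]
  have h1 : ∏ j ∈ Finset.Iio a, (1 - f (s j)) = P := by
    rw [hPdef]
    refine Finset.prod_congr rfl fun j hj => ?_
    rw [Finset.mem_Iio] at hj
    rw [hsother j (ne_of_lt hj) (ne_of_lt (hj.trans hab'))]
  have hIiob : Finset.Iio b = insert a (Finset.Iio a) := by
    ext j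
    simp only [Finset.mem_Iio, Finset.mem_insert, Fin.lt_def, Fin.ext_iff]
    omega
  have hanotmem : a ∉ Finset.Iio a := by simp
  have key : errG m w (f ∘ s) - errG m w f =
      ∑ i ∈ ({a, b} : Finset (Fin m)),
        (w i * f (s i) * ∏ j ∈ Finset.Iio i, (1 - f (s j))
          - w i * f i * ∏ j ∈ Finset.Iio i, (1 - f j)) := by
    simp only [errG, Function.comp_apply, ← Finset.sum_sub_distrib]
    refine (Finset.sum_subset (Finset.subset_univ _) ?_).symm
    intro i _ hi
    simp only [Finset.mem_insert, Finset.mem_singleton, not_or] at hi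
    obtain ⟨hia, hib⟩ := hi
    have hsi : s i = i := hsother i hia hib
    have hcase : (i : ℕ) < (a : ℕ) ∨ (b : ℕ) < (i : ℕ) := by
      have e1 : (i : ℕ) ≠ (a : ℕ) := fun h => hia (Fin.ext h)
      have e2 : (i : ℕ) ≠ (b : ℕ) := fun h => hib (Fin.ext h)
      omega
    have hprod : ∏ j ∈ Finset.Iio i, (1 - f (s j)) = ∏ j ∈ Finset.Iio i, (1 - f j) := by
      rcases hcase with h | h
      · refine Finset.prod_congr rfl fun j hj => ?_
        rw [Finset.mem_Iio, Fin.lt_def] at hj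
        rw [hsother j (by intro e; rw [e] at hj; omega) (by intro e; rw [e] at hj; omega)]
      · refine Finset.prod_equiv s ?_ ?_
        · intro j
          simp only [Finset.mem_Iio]
          rcases eq_or_ne j a with rfl | hja
          · rw [hsa, Fin.lt_def, Fin.lt_def]; omega
          rcases eq_or_ne j b with rfl | hjb
          · rw [hsb, Fin.lt_def, Fin.lt_def]; omega
          · rw [hsother j hja hjb]
        · intro j _; rfl
    rw [hsi, hprod]
    ring
  have key3 : errG m w (f ∘ s) - errG m w f = (f b - f a) * (w a - w b) * P := by
    rw [key, Finset.sum_pair (ne_of_lt hab')]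
    simp only [hsa, hsb, hIiob, Finset.prod_insert hanotmem, h1]
    ring
  nlinarith [mul_nonneg (mul_nonneg (sub_nonneg.2 hfab) (sub_nonneg.2 hwab)) hPnn]

lemma err_antitone_of_no_adj {m : ℕ} (f : Fin m → ℝ)
    (h : ∀ a b : Fin m, (a : ℕ) + 1 = (b : ℕ) → f b ≤ f a) :
    ∀ i j : Fin m, i ≤ j → f j ≤ f i := by
  have key : ∀ n : ℕ, ∀ i j : Fin m, (j : ℕ) = (i : ℕ) + n → f j ≤ f i := by
    intro n
    induction n with
    | zero =>
      intro i j hij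
      have : j = i := Fin.ext (by omega)
      rw [this]
    | succ n ih =>
      intro i j hij
      have hk : (i : ℕ) + n < m := by omega
      have h1 : f j ≤ f ⟨(i : ℕ) + n, hk⟩ := h ⟨(i : ℕ) + n, hk⟩ j (by simp; omega)
      have h2 : f ⟨(i : ℕ) + n, hk⟩ ≤ f i := ih i ⟨(i : ℕ) + n, hk⟩ rfl
      exact h1.trans h2
  intro i j hij
  rw [Fin.le_def] at hij
  exact key ((j : ℕ) - (i : ℕ)) i j (by omega)

lemma err_antitone_rearrange_eq {m : ℕ} (f q : Fin m → ℝ)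
    (hf : ∀ i j : Fin m, i ≤ j → f j ≤ f i)
    (hq : ∀ i j : Fin m, i ≤ j → q j ≤ q i)
    (τ : Equiv.Perm (Fin m)) (hfq : f = q ∘ τ) : f = q := by
  have hcard : ∀ c : ℝ, (Finset.univ.filter (fun j => c ≤ f j)).card
      = (Finset.univ.filter (fun j => c ≤ q j)).card := by
    intro c
    apply Finset.card_bij (fun j _ => τ j)
    · intro j hj
      simp only [Finset.mem_filter, Finset.mem_univ, true_and] at *
      rw [hfq] at hj; exact hj
    · intro x _ y _ h; exact τ.injective h
    · intro j hj
      refine ⟨τ.symm j, ?_, by simp⟩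
      simp only [Finset.mem_filter, Finset.mem_univ, true_and] at *
      rw [hfq]; simpa using hj
  have hiff : ∀ (g : Fin m → ℝ), (∀ i j : Fin m, i ≤ j → g j ≤ g i) →
      ∀ (c : ℝ) (i : Fin m),
        c ≤ g i ↔ (i : ℕ) < (Finset.univ.filter (fun j => c ≤ g j)).card := by
    intro g hg c i
    constructor
    · intro hci
      have hsub : Finset.Iic i ⊆ Finset.univ.filter (fun j => c ≤ g j) := by
        intro j hj
        simp only [Finset.mem_Iic] at hj
        simp only [Finset.mem_filter, Finset.mem_univ, true_and]
        exact hci.trans (hg j i hj)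
      have := Finset.card_le_card hsub
      rw [Fin.card_Iic] at this
      omega
    · intro hcard'
      by_contra hlt
      push_neg at hlt
      have hsub : Finset.univ.filter (fun j => c ≤ g j) ⊆ Finset.Iio i := by
        intro j hj
        simp only [Finset.mem_filter, Finset.mem_univ, true_and] at hj
        simp only [Finset.mem_Iio]
        by_contra hji
        push_neg at hji
        exact absurd (hj.trans (hg i j hji)) (not_le.2 hlt)
      have := Finset.card_le_card hsub
      rw [Fin.card_Iio] at this
      omega
  funext i
  have h1 : q i ≤ f i :=
    (hiff f hf (q i) i).2 (by rw [hcard]; exact (hiff q hq (q i) i).1 le_rfl)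
  have h2 : f i ≤ q i :=
    (hiff q hq (f i) i).2 (by rw [← hcard]; exact (hiff f hf (f i) i).1 le_rfl)
  linarith

lemma err_G_le_of_rearrange {m : ℕ} (w q : Fin m → ℝ)
    (hw : ∀ i j : Fin m, i ≤ j → w j ≤ w i)
    (hq1 : ∀ i, q i ≤ 1)
    (hqa : ∀ i j : Fin m, i ≤ j → q j ≤ q i) :
    ∀ (N : ℕ) (f : Fin m → ℝ), (errInv m f).card ≤ N →
      (∃ τ : Equiv.Perm (Fin m), f = q ∘ τ) → errG m w f ≤ errG m w q := by
  intro N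
  induction N with
  | zero =>
    rintro f hcard ⟨τ, hfq⟩
    have hanti : ∀ i j : Fin m, i ≤ j → f j ≤ f i := by
      apply err_antitone_of_no_adj
      intro a b hab
      by_contra hlt
      push_neg at hlt
      have hab' : a < b := by rw [Fin.lt_def]; omega
      have hmem : (a, b) ∈ errInv m f := by simp [errInv, hlt, hab']
      have hpos := Finset.card_pos.2 ⟨_, hmem⟩
      omega
    rw [err_antitone_rearrange_eq f q hanti hqa τ hfq]
  | succ N ih =>
    rintro f hcard ⟨τ, hfq⟩
    by_cases hadj : ∃ a b : Fin m, (a : ℕ) + 1 = (b : ℕ) ∧ f a < f b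
    · obtain ⟨a, b, hab, hflt⟩ := hadj
      have hf1 : ∀ j, f j ≤ 1 := by intro j; rw [hfq]; exact hq1 _
      have h1 := err_G_swap_le w f hf1 hw a b hab hflt.le
      have h2 : errG m w (f ∘ Equiv.swap a b) ≤ errG m w q := by
        apply ih
        · have := err_inv_card_lt f a b hab hflt; omega
        · exact ⟨(Equiv.swap a b).trans τ, by rw [hfq]; rfl⟩
      exact h1.trans h2
    · push_neg at hadj
      have hanti := err_antitone_of_no_adj f fun a b hab => hadj a b hab
      rw [err_antitone_rearrange_eq f q hanti hqa τ hfq]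

/-- Sorting items in decreasing order of satisfaction probability maximizes the
expected reciprocal rank reward under the cascade model. -/
theorem err_sorted_is_optimal (m : ℕ) (p : Fin m → ℝ)
    (hp : ∀ i, p i ∈ Set.Icc (0 : ℝ) 1)
    (F : ℕ → ℝ) (hF : StrictMono F) (hF1 : ∀ n, 1 ≤ F n)
    (π : Equiv.Perm (Fin m))
    (hsort : ∀ i j : Fin m, i ≤ j → p (π.symm j) ≤ p (π.symm i)) :
    ∀ σ : Equiv.Perm (Fin m), errReward m p F σ ≤ errReward m p F π := by
  intro σ
  have hq1 : ∀ i : Fin m, (p ∘ π.symm) i ≤ 1 := fun i => (hp _).2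
  have hw : ∀ i j : Fin m, i ≤ j →
      (fun k : Fin m => 1 / F ((k : ℕ) + 1)) j ≤ (fun k : Fin m => 1 / F ((k : ℕ) + 1)) i := by
    intro i j hij
    have h0 : 0 < F ((i : ℕ) + 1) := lt_of_lt_of_le one_pos (hF1 _)
    exact one_div_le_one_div_of_le h0 (hF.monotone (by rw [Fin.le_def] at hij; omega))
  have := err_G_le_of_rearrange (fun k : Fin m => 1 / F ((k : ℕ) + 1)) (p ∘ π.symm)
    hw hq1 hsort (errInv m (p ∘ σ.symm)).card (p ∘ σ.symm) le_rfl
    ⟨σ.symm.trans π, by funext i; simp⟩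
  exact this
end

section
/- An adjacent-transposition exchange argument for the cascade objective: let p ∈ [0,1]^m, F : ℕ → [1,∞) strictly increasing, and let π be a permutation with p_{π⁻¹(i)} < p_{π⁻¹(i+1)} for some position i < m. Let π' be the permutation obtained from π by swapping the items in positions i and i+1. Then R(π') ≥ R(π), where R(π) = Σ_{i=1}^m (1/F(i)) p_{π⁻¹(i)} Π_{j<i} (1 - p_{π⁻¹(j)}). -/
open Finset

/-- Adjacent-transposition exchange: if the item at position `i` has strictly smaller
satisfaction probability than the item at position `i+1`, swapping them does not
decrease the cascade reward. -/
theorem err_adjacent_swap (m : ℕ) (p : Fin m → ℝ)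
    (hp : ∀ i, p i ∈ Set.Icc (0 : ℝ) 1)
    (F : ℕ → ℝ) (hF : StrictMono F) (hF1 : ∀ n, 1 ≤ F n)
    (π : Equiv.Perm (Fin m)) (i : Fin m) (hi : (i : ℕ) + 1 < m)
    (hlt : p (π.symm i) < p (π.symm ⟨(i : ℕ) + 1, hi⟩)) :
    errReward m p F π ≤ errReward m p F (π.trans (Equiv.swap i ⟨(i : ℕ) + 1, hi⟩)) := by
  set i' : Fin m := ⟨(i : ℕ) + 1, hi⟩ with hi'def
  have hii' : i < i' := by simp [Fin.lt_def, hi'def]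
  have hne : i ≠ i' := ne_of_lt hii'
  set σ := Equiv.swap i i' with hσ
  set π' := π.trans σ with hπ'
  have hsymm : ∀ k, π'.symm k = π.symm (σ k) := by
    intro k
    simp [hπ', hσ, Equiv.symm_trans_apply]
  have hswap_mem : ∀ k : Fin m, k ≠ i → k ≠ i' → ∀ j ∈ Iio k, σ j ∈ Iio k := by
    intro k hki hki' j hj
    simp only [mem_Iio] at hj ⊢
    rcases eq_or_ne j i with rfl | hji
    · rw [hσ, Equiv.swap_apply_left]
      have h1 : (j : ℕ) < (k : ℕ) := hj
      have hk : (j : ℕ) + 1 ≠ (k : ℕ) := fun h => hki' (Fin.ext h.symm)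
      exact Fin.lt_def.mpr (lt_of_le_of_ne (Nat.succ_le_of_lt h1) hk)
    rcases eq_or_ne j i' with rfl | hji'
    · rw [hσ, Equiv.swap_apply_right]; exact lt_trans hii' hj
    · rw [hσ, Equiv.swap_apply_of_ne_of_ne hji hji']; exact hj
  have hprod : ∀ k : Fin m, k ≠ i → k ≠ i' →
      ∏ j ∈ Iio k, (1 - p (π'.symm j)) = ∏ j ∈ Iio k, (1 - p (π.symm j)) := by
    intro k hki hki'
    simp only [hsymm]
    refine Finset.prod_nbij' (fun j => σ j) (fun j => σ j) (hswap_mem k hki hki')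
      (hswap_mem k hki hki') (fun j _ => by simp [hσ]) (fun j _ => by simp [hσ]) (fun j _ => by simp [hσ])
  have hsplit : ∀ τ : Equiv.Perm (Fin m),
      errReward m p F τ =
        (∑ k ∈ (univ.erase i).erase i',
          (1 / F ((k : ℕ) + 1)) * p (τ.symm k) * ∏ j ∈ Iio k, (1 - p (τ.symm j)))
        + ((1 / F ((i : ℕ) + 1)) * p (τ.symm i) * ∏ j ∈ Iio i, (1 - p (τ.symm j))
        + (1 / F ((i' : ℕ) + 1)) * p (τ.symm i') * ∏ j ∈ Iio i', (1 - p (τ.symm j))) := by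
    intro τ
    rw [errReward, ← Finset.add_sum_erase _ _ (mem_univ i),
      ← Finset.add_sum_erase _ _ (Finset.mem_erase.mpr ⟨hne.symm, mem_univ i'⟩)]
    ring
  rw [hsplit π, hsplit π']
  have hrest : ∑ k ∈ (univ.erase i).erase i',
      (1 / F ((k : ℕ) + 1)) * p (π'.symm k) * ∏ j ∈ Iio k, (1 - p (π'.symm j)) =
      ∑ k ∈ (univ.erase i).erase i',
      (1 / F ((k : ℕ) + 1)) * p (π.symm k) * ∏ j ∈ Iio k, (1 - p (π.symm j)) := by
    refine Finset.sum_congr rfl (fun k hk => ?_)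
    have hki' : k ≠ i' := (Finset.mem_erase.mp hk).1
    have hki : k ≠ i := (Finset.mem_erase.mp (Finset.mem_erase.mp hk).2).1
    rw [hprod k hki hki', hsymm, hσ, Equiv.swap_apply_of_ne_of_ne hki hki']
  rw [hrest]
  apply (add_le_add_iff_left _).mpr
  -- compute middle terms
  have hσi : σ i = i' := by rw [hσ]; exact Equiv.swap_apply_left i i'
  have hσi' : σ i' = i := by rw [hσ]; exact Equiv.swap_apply_right i i'
  have hPi : ∏ j ∈ Iio i, (1 - p (π'.symm j)) = ∏ j ∈ Iio i, (1 - p (π.symm j)) := by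
    refine Finset.prod_congr rfl (fun j hj => ?_)
    have hj' : j < i := Finset.mem_Iio.mp hj
    rw [hsymm, hσ, Equiv.swap_apply_of_ne_of_ne (ne_of_lt hj') (ne_of_lt (lt_trans hj' hii'))]
  have hIio : Iio i' = insert i (Iio i) := by
    ext j
    simp only [mem_Iio, mem_insert, Fin.lt_def, Fin.ext_iff, hi'def]
    omega
  have hnotmem : i ∉ Iio i := by simp
  set a := p (π.symm i) with ha
  set b := p (π.symm i') with hb
  set P := ∏ j ∈ Iio i, (1 - p (π.symm j)) with hP
  have hP0 : 0 ≤ P := Finset.prod_nonneg (fun j _ => by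
    have := (hp (π.symm j)).2; linarith)
  have hgf : 1 / F ((i : ℕ) + 1 + 1) ≤ 1 / F ((i : ℕ) + 1) :=
    one_div_le_one_div_of_le (by linarith [hF1 ((i : ℕ) + 1)]) (le_of_lt (hF (by omega)))
  have e1 : π'.symm i = π.symm i' := by rw [hsymm, hσi]
  have e2 : π'.symm i' = π.symm i := by rw [hsymm, hσi']
  have hcoe : ((i' : Fin m) : ℕ) = (i : ℕ) + 1 := rfl
  rw [hcoe, hIio, Finset.prod_insert hnotmem, Finset.prod_insert hnotmem, e1, e2, hPi]
  have hab : a < b := hlt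
  nlinarith [mul_nonneg (mul_nonneg hP0 (le_of_lt (sub_pos.mpr hab)))
    (sub_nonneg.mpr hgf)]
end

section
/- Consider the NDCG-family conditional risk: given a probability measure λ on a finite structure space S ⊆ ℝ^m and weights w_j = ∫ G(s_j)/Z(s) dλ(s) for j = 1,…,m, where F : ℕ → (0,∞) is strictly increasing and G > 0, the conditional risk ℓ(α, λ) = 1 - Σ_{j=1}^m w_j / F(π_α(j)) (where π_α(j) is the rank of item j when items are sorted in decreasing order of α) is minimized exactly by those α ∈ ℝ^m whose induced permutation sorts indices in decreasing order of w_j; in particular any α satisfying α_j > α_l whenever w_j > w_l is a minimizer. -/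
open Finset

/-- NDCG-family conditional risk: with weights `w j = ∫ G(s_j)/Z(s) dλ(s)` over a finite
structure space, `F` strictly increasing and positive, and `π_α` any permutation compatible
with sorting scores `α` in decreasing order, the conditional risk
`ℓ(α, λ) = 1 - ∑ j, w j / F (π_α j)` is minimized exactly by those `α` whose induced
permutation sorts the indices in decreasing order of `w`; in particular any `α` with
`α j > α l` whenever `w j > w l` is a minimizer. (Ranks are 0-indexed; `F` is evaluated
at rank + 1.) -/
theorem ndcg_risk_minimized_by_decreasing_w (m : ℕ) (S : Type*) [Fintype S]
    (lam : S → ℝ) (hlam0 : ∀ s, 0 ≤ lam s) (hlam1 : ∑ s, lam s = 1)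
    (sc : S → Fin m → ℝ) (G : ℝ → ℝ) (hG : ∀ x, 0 < G x)
    (Z : S → ℝ) (hZ : ∀ s, 0 < Z s)
    (F : ℕ → ℝ) (hF : StrictMono F) (hFpos : ∀ n, 0 < F n)
    (w : Fin m → ℝ) (hw : ∀ j, w j = ∑ s, lam s * (G (sc s j) / Z s))
    (risk : Equiv.Perm (Fin m) → ℝ)
    (hrisk : ∀ π, risk π = 1 - ∑ j, w j / F ((π j : ℕ) + 1)) :
    (∀ (α : Fin m → ℝ) (π : Equiv.Perm (Fin m)),
        (∀ j l, α j > α l → π j < π l) →   -- π is induced by sorting α decreasingly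
        (∀ j l, w j > w l → α j > α l) →   -- α orders items by decreasing w
        ∀ (α' : Fin m → ℝ) (π' : Equiv.Perm (Fin m)),
          (∀ j l, α' j > α' l → π' j < π' l) → risk π ≤ risk π') ∧
    (∀ (α : Fin m → ℝ) (π : Equiv.Perm (Fin m)),
        (∀ j l, α j > α l → π j < π l) →
        (∀ π' : Equiv.Perm (Fin m), risk π ≤ risk π') →  -- π achieves minimal risk
        ∀ j l, w j > w l → π j < π l) := by
  classical
  set v : Fin m → ℝ := fun k => 1 / F ((k : ℕ) + 1) with hv
  have hvanti : StrictAnti v := by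
    intro a b hab
    have hab' : (a : ℕ) < (b : ℕ) := hab
    exact one_div_lt_one_div_of_lt (hFpos _) (hF (by omega))
  have hrisk' : ∀ π : Equiv.Perm (Fin m), risk π = 1 - ∑ j, w j * v (π j) := by
    intro π
    rw [hrisk]
    congr 1
    exact Finset.sum_congr rfl fun j _ => by rw [hv]; ring
  constructor
  · -- any w-compatible π is a minimizer
    intro α π hπ hα α' π' hπ'
    have hmono : Monovary w (v ∘ π) := by
      intro i j hij
      by_contra h
      push_neg at h
      have h1 : π i < π j := hπ _ _ (hα _ _ h)
      have h2 : π j < π i := (hvanti.lt_iff_gt).mp hij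
      exact absurd (h1.trans h2) (lt_irrefl _)
    have key : ∑ i, w i * (v ∘ π) ((π⁻¹ * π') i) ≤ ∑ i, w i * (v ∘ π) i :=
      hmono.sum_mul_comp_perm_le_sum_mul
    have heq : ∀ i, (v ∘ π) ((π⁻¹ * π') i) = v (π' i) := by
      intro i
      simp [Equiv.Perm.mul_apply]
    rw [hrisk' π, hrisk' π']
    have : ∑ i, w i * v (π' i) ≤ ∑ i, w i * v (π i) := by
      calc ∑ i, w i * v (π' i) = ∑ i, w i * (v ∘ π) ((π⁻¹ * π') i) := by
            exact Finset.sum_congr rfl fun i _ => by rw [heq]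
        _ ≤ ∑ i, w i * (v ∘ π) i := key
        _ = ∑ i, w i * v (π i) := rfl
    linarith
  · -- any minimizer must order by decreasing w
    intro α π hπ hmin j l hwjl
    by_contra hc
    push_neg at hc
    have hjl : j ≠ l := fun h => by rw [h] at hwjl; exact lt_irrefl _ hwjl
    have hlt : π l < π j := lt_of_le_of_ne hc (fun h => hjl (π.injective h.symm))
    set τ : Equiv.Perm (Fin m) := π * Equiv.swap j l with hτ
    have hτj : τ j = π l := by simp [hτ, Equiv.Perm.mul_apply]
    have hτl : τ l = π j := by simp [hτ, Equiv.Perm.mul_apply]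
    have hcomp : ∀ i, w i * v (τ i) - w i * v (π i) =
        (if i = j then w j * (v (π l) - v (π j)) else 0) +
        (if i = l then w l * (v (π j) - v (π l)) else 0) := by
      intro i
      rcases eq_or_ne i j with rfl | hij
      · simp [hτj, hjl]; ring
      · rcases eq_or_ne i l with rfl | hil
        · simp [hτl, hjl.symm, hij]; ring
        · have : τ i = π i := by
            simp [hτ, Equiv.Perm.mul_apply, Equiv.swap_apply_of_ne_of_ne hij hil]
          simp [this, hij, hil]
    have hsum : ∑ i, w i * v (τ i) - ∑ i, w i * v (π i) =
        (w j - w l) * (v (π l) - v (π j)) := by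
      rw [← Finset.sum_sub_distrib]
      rw [Finset.sum_congr rfl fun i _ => hcomp i, Finset.sum_add_distrib,
        Finset.sum_ite_eq' Finset.univ j, Finset.sum_ite_eq' Finset.univ l]
      simp
      ring
    have hvpos : 0 < v (π l) - v (π j) := sub_pos.mpr (hvanti hlt)
    have hwpos : 0 < w j - w l := sub_pos.mpr hwjl
    have hgt : ∑ i, w i * v (π i) < ∑ i, w i * v (τ i) := by
      nlinarith
    have := hmin τ
    rw [hrisk' π, hrisk' τ] at this
    linarith
end

section
/- Suppose the surrogate loss φ : ℝ^m × S → ℝ≥0 is bounded below, S is finite, and the loss L takes finitely many values. If φ is structure-consistent — i.e., for every probability measure λ on S, inf_α ∫φ(α,s)dλ(s) < inf { ∫φ(α,s)dλ(s) : α ∉ argmin_{α'} ∫L(α',s)dλ(s) } — then for every ε > 0 there exists δ > 0 such that for every probability measure λ on S and every α ∈ ℝ^m, ∫φ(α,s)dλ(s) - inf_{α'}∫φ(α',s)dλ(s) < δ implies ∫L(α,s)dλ(s) - inf_{α'}∫L(α',s)dλ(s) < ε. -/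
open Finset
open Filter

set_option maxHeartbeats 1000000

/-- Structure-consistency implies uniform Fisher consistency (finite structure space,
finitely-valued loss): if for every probability measure `lam` on the finite set `S`
the infimum of the conditional surrogate risk is strictly smaller than its infimum over
scores not minimizing the conditional risk, then for every `ε > 0` there is `δ > 0`
such that, for every `lam` and every `α`, surrogate-risk suboptimality `< δ` implies
risk suboptimality `< ε`. -/
theorem structure_consistent_implies_uniform_consistency
    (m : ℕ) (S : Type*) [Fintype S]
    (L : (Fin m → ℝ) → S → ℝ) (hL : ∀ α s, L α s ∈ Set.Icc (0 : ℝ) 1)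
    (hLfin : (Set.range (Function.uncurry L)).Finite)
    (φ : (Fin m → ℝ) → S → ℝ) (hφ : ∀ α s, 0 ≤ φ α s)
    (hSC : ∀ lam : S → ℝ, (∀ s, 0 ≤ lam s) → (∑ s, lam s) = 1 →
      ∃ cval : ℝ,
        (⨅ α : Fin m → ℝ, ∑ s, lam s * φ α s) < cval ∧
        ∀ α : Fin m → ℝ,
          ¬ (∀ β : Fin m → ℝ, ∑ s, lam s * L α s ≤ ∑ s, lam s * L β s) →
          cval ≤ ∑ s, lam s * φ α s) :
    ∀ ε > 0, ∃ δ > 0, ∀ lam : S → ℝ, (∀ s, 0 ≤ lam s) → (∑ s, lam s) = 1 →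
      ∀ α : Fin m → ℝ,
        (∑ s, lam s * φ α s) - (⨅ α' : Fin m → ℝ, ∑ s, lam s * φ α' s) < δ →
        (∑ s, lam s * L α s) - (⨅ α' : Fin m → ℝ, ∑ s, lam s * L α' s) < ε := by
  classical
  -- the set of achievable loss vectors is finite
  have hT : (Set.range (fun α : Fin m → ℝ => fun s => L α s)).Finite := by
    apply Set.Finite.subset (Set.Finite.pi (fun _ : S => hLfin))
    rintro w ⟨α, rfl⟩ s _
    exact ⟨(α, s), rfl⟩
  -- risk minimizer exists
  have hmin : ∀ lam : S → ℝ, ∃ α₀ : Fin m → ℝ,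
      ∀ β, ∑ s, lam s * L α₀ s ≤ ∑ s, lam s * L β s := by
    intro lam
    obtain ⟨w, hw, hwmin⟩ := Set.exists_min_image _ (fun w : S → ℝ => ∑ s, lam s * w s) hT
      ⟨_, ⟨0, rfl⟩⟩
    obtain ⟨α₀, rfl⟩ := hw
    exact ⟨α₀, fun β => hwmin _ ⟨β, rfl⟩⟩
  have hbddL : ∀ lam : S → ℝ, (∀ s, 0 ≤ lam s) →
      BddBelow (Set.range fun α : Fin m → ℝ => ∑ s, lam s * L α s) := by
    intro lam h
    exact ⟨0, by rintro _ ⟨α, rfl⟩; exact Finset.sum_nonneg fun s _ => mul_nonneg (h s) (hL α s).1⟩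
  have hbddφ : ∀ lam : S → ℝ, (∀ s, 0 ≤ lam s) →
      BddBelow (Set.range fun α : Fin m → ℝ => ∑ s, lam s * φ α s) := by
    intro lam h
    exact ⟨0, by rintro _ ⟨α, rfl⟩; exact Finset.sum_nonneg fun s _ => mul_nonneg (h s) (hφ α s)⟩
  have hRinf : ∀ lam : S → ℝ, (∀ s, 0 ≤ lam s) → ∃ α₀ : Fin m → ℝ,
      (⨅ α' : Fin m → ℝ, ∑ s, lam s * L α' s) = ∑ s, lam s * L α₀ s ∧
      ∀ β, ∑ s, lam s * L α₀ s ≤ ∑ s, lam s * L β s := by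
    intro lam h
    obtain ⟨α₀, h₀⟩ := hmin lam
    exact ⟨α₀, le_antisymm (ciInf_le (hbddL lam h) α₀) (le_ciInf h₀), h₀⟩
  -- a simple Lipschitz-type bound in lam
  have hlip : ∀ (μ ν w : S → ℝ), (∀ s, |w s| ≤ 1) →
      ∑ s, μ s * w s ≤ (∑ s, ν s * w s) + ∑ s, |μ s - ν s| := by
    intro μ ν w hw
    rw [← Finset.sum_add_distrib]
    apply Finset.sum_le_sum
    intro s _
    have h1 : (μ s - ν s) * w s ≤ |μ s - ν s| := by
      calc (μ s - ν s) * w s ≤ |(μ s - ν s) * w s| := le_abs_self _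
        _ = |μ s - ν s| * |w s| := abs_mul _ _
        _ ≤ |μ s - ν s| * 1 := mul_le_mul_of_nonneg_left (hw s) (abs_nonneg _)
        _ = |μ s - ν s| := mul_one _
    nlinarith [h1]
  have hLabs : ∀ α s, |L α s| ≤ 1 := fun α s =>
    abs_le.2 ⟨by linarith [(hL α s).1], (hL α s).2⟩
  intro ε hε
  by_contra hcon
  push_neg at hcon
  choose lam h0 h1 α hA hB using fun n : ℕ => hcon (1 / ((n : ℝ) + 1)) (by positivity)
  -- compactness of the simplex
  have hΔc : IsCompact {f : S → ℝ | (∀ s, 0 ≤ f s) ∧ ∑ s, f s = 1} := by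
    apply IsCompact.of_isClosed_subset
      (isCompact_univ_pi fun _ : S => isCompact_Icc (a := (0:ℝ)) (b := 1))
    · have : {f : S → ℝ | (∀ s, 0 ≤ f s) ∧ ∑ s, f s = 1} =
        (⋂ s, {f : S → ℝ | 0 ≤ f s}) ∩ {f | ∑ s, f s = 1} := by
        ext f; simp [Set.mem_iInter]
      rw [this]
      exact IsClosed.inter (isClosed_iInter fun s => isClosed_le continuous_const
        (continuous_apply s))
        (isClosed_eq (continuous_finset_sum _ fun s _ => continuous_apply s) continuous_const)
    · rintro f ⟨hf0, hf1⟩ s _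
      refine ⟨hf0 s, ?_⟩
      rw [← hf1]
      exact Finset.single_le_sum (fun t _ => hf0 t) (mem_univ s)
  obtain ⟨lamS, hlamS, g, hg, htend⟩ := hΔc.tendsto_subseq (x := lam) fun n => ⟨h0 n, h1 n⟩
  obtain ⟨hlamS0, hlamS1⟩ := hlamS
  -- pigeonhole on loss vectors
  haveI : Finite ↥(Set.range (fun α : Fin m → ℝ => fun s => L α s)) := hT.to_subtype
  obtain ⟨y, hy⟩ := Finite.exists_infinite_fiber
    (fun n : ℕ => (⟨fun s => L (α (g n)) s, ⟨_, rfl⟩⟩ :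
      ↥(Set.range (fun α : Fin m → ℝ => fun s => L α s))))
  set v : S → ℝ := (y : S → ℝ) with hv
  have hI : {n : ℕ | (fun s => L (α (g n)) s) = v}.Infinite := by
    apply Set.Infinite.mono _ (Set.infinite_coe_iff.mp hy)
    intro n hn
    simp only [Set.mem_preimage, Set.mem_singleton_iff] at hn
    exact congrArg Subtype.val hn
  set I := {n : ℕ | (fun s => L (α (g n)) s) = v} with hIdef
  have hvabs : ∀ n ∈ I, ∀ s, L (α (g n)) s = v s := fun n hn s => congrFun hn s
  -- the deviation sequence
  set e : ℕ → ℝ := fun n => ∑ s, |lam (g n) s - lamS s| with hedef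
  have he : Tendsto e atTop (nhds 0) := by
    have h1 : ∀ s : S, Tendsto (fun n => lam (g n) s) atTop (nhds (lamS s)) :=
      fun s => tendsto_pi_nhds.mp htend s
    have h2 := tendsto_finset_sum (univ : Finset S)
      (fun s (_ : s ∈ univ) => ((h1 s).sub (tendsto_const_nhds (x := lamS s))).abs)
    simpa using h2
  have heb : ∀ n s, |lam (g n) s - lamS s| ≤ e n := fun n s =>
    Finset.single_le_sum (f := fun s => |lam (g n) s - lamS s|)
      (fun t _ => abs_nonneg _) (mem_univ s)
  have henn : ∀ n, 0 ≤ e n := fun n => Finset.sum_nonneg fun s _ => abs_nonneg _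
  have hecomm : ∀ n, ∑ s, |lamS s - lam (g n) s| = e n := fun n =>
    Finset.sum_congr rfl fun s _ => abs_sub_comm _ _
  -- Step A: the loss vector v is strictly suboptimal at lamS
  obtain ⟨αst, hαst_eq, hαst_min⟩ := hRinf lamS hlamS0
  have hstepA : (∑ s, lamS s * L αst s) < ∑ s, lamS s * v s := by
    obtain ⟨N, hN⟩ := eventually_atTop.mp
      (he.eventually (eventually_lt_nhds (by linarith : (0:ℝ) < ε/2)))
    obtain ⟨n₀, hn₀I, hn₀N⟩ := hI.exists_gt N
    have heN : e n₀ < ε/2 := hN n₀ hn₀N.le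
    obtain ⟨αμ, hαμ_eq, hαμ_min⟩ := hRinf (lam (g n₀)) (h0 (g n₀))
    have hB' : ε ≤ (∑ s, lam (g n₀) s * v s) - ∑ s, lam (g n₀) s * L αμ s := by
      have := hB (g n₀)
      rw [hαμ_eq] at this
      calc ε ≤ (∑ s, lam (g n₀) s * L (α (g n₀)) s) - ∑ s, lam (g n₀) s * L αμ s := this
        _ = (∑ s, lam (g n₀) s * v s) - ∑ s, lam (g n₀) s * L αμ s := by
            rw [Finset.sum_congr rfl fun s _ => by rw [hvabs n₀ hn₀I s]]
    have hv1 : ∀ s, |v s| ≤ 1 := by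
      intro s; rw [← hvabs n₀ hn₀I s]; exact hLabs _ s
    have l1 : ∑ s, lam (g n₀) s * v s ≤ (∑ s, lamS s * v s) + e n₀ :=
      hlip (lam (g n₀)) lamS v hv1
    have l2 : ∑ s, lamS s * L αμ s ≤ (∑ s, lam (g n₀) s * L αμ s) + e n₀ := by
      have := hlip lamS (lam (g n₀)) (fun s => L αμ s) (fun s => hLabs αμ s)
      rwa [hecomm n₀] at this
    have l3 : ∑ s, lamS s * L αst s ≤ ∑ s, lamS s * L αμ s := hαst_min αμ
    linarith
  -- every α whose loss vector is v is a non-minimizer at lamS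
  have hnonmin : ∀ n ∈ I,
      ¬ (∀ β' : Fin m → ℝ, ∑ s, lamS s * L (α (g n)) s ≤ ∑ s, lamS s * L β' s) := by
    intro n hn hall
    have h1 : ∑ s, lamS s * L (α (g n)) s = ∑ s, lamS s * v s :=
      Finset.sum_congr rfl fun s _ => by rw [hvabs n hn s]
    have := hall αst
    rw [h1] at this
    linarith
  obtain ⟨c, hc1, hc2⟩ := hSC lamS hlamS0 hlamS1
  -- Step B
  set Pst := ⨅ α' : Fin m → ℝ, ∑ s, lamS s * φ α' s with hPst
  set η := c - Pst with hη'
  have hη : 0 < η := by simp only [hη']; linarith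
  obtain ⟨γ, hγ⟩ := exists_lt_of_ciInf_lt
    (show (⨅ α' : Fin m → ℝ, ∑ s, lamS s * φ α' s) < Pst + η/4 by rw [← hPst]; linarith)
  set C := ∑ s, φ (fun _ => (0:ℝ)) s with hCdef
  have hC : 0 ≤ C := Finset.sum_nonneg fun s _ => hφ _ s
  have hPinfle : ∀ μ : S → ℝ, (∀ s, 0 ≤ μ s) → (∑ s, μ s) = 1 →
      (⨅ α' : Fin m → ℝ, ∑ s, μ s * φ α' s) ≤ C := by
    intro μ hμ0 hμ1
    refine le_trans (ciInf_le (hbddφ μ hμ0) (fun _ => 0)) ?_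
    apply Finset.sum_le_sum
    intro s _
    have hμle : μ s ≤ 1 := by
      rw [← hμ1]; exact Finset.single_le_sum (fun t _ => hμ0 t) (mem_univ s)
    exact mul_le_of_le_one_left (hφ _ s) hμle
  set C' := ∑ s, φ γ s with hC'def
  have hC' : 0 ≤ C' := Finset.sum_nonneg fun s _ => hφ _ s
  have hC's : ∀ s, φ γ s ≤ C' := fun s =>
    Finset.single_le_sum (f := fun s => φ γ s) (fun t _ => hφ _ t) (mem_univ s)
  -- the support of lamS
  set D := univ.filter (fun s => 0 < lamS s) with hDdef
  have hD : D.Nonempty := by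
    have hex : ∃ s, lamS s ≠ 0 := by
      by_contra hall
      push_neg at hall
      rw [Finset.sum_congr rfl fun s _ => hall s] at hlamS1
      simp at hlamS1
    obtain ⟨s₀, hs₀⟩ := hex
    exact ⟨s₀, mem_filter.mpr ⟨mem_univ s₀, lt_of_le_of_ne (hlamS0 s₀) (Ne.symm hs₀)⟩⟩
  set lmin := D.inf' hD lamS with hlmindef
  have hlmin : 0 < lmin := (Finset.lt_inf'_iff hD).mpr fun s hs => (mem_filter.mp hs).2
  have hlmin_le : ∀ s ∈ D, lmin ≤ lamS s := fun s hs => Finset.inf'_le _ hs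
  set K := (C+1)/(lmin/2) with hKdef
  have hK : 0 ≤ K := by positivity
  set θ := min (lmin/2) (η/(4*(C'+K+1))) with hθdef
  have hθ : 0 < θ := lt_min (by positivity) (by positivity)
  obtain ⟨N', hN'⟩ := eventually_atTop.mp (he.eventually (eventually_lt_nhds hθ))
  obtain ⟨M, hM⟩ := exists_nat_one_div_lt (show (0:ℝ) < η/4 by positivity)
  obtain ⟨n₁, hn₁I, hn₁⟩ := hI.exists_gt (max N' M)
  have hek : e n₁ < θ := hN' n₁ (le_of_lt (lt_of_le_of_lt (le_max_left _ _) hn₁))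
  have hd : 1/((g n₁ : ℝ)+1) < η/4 := by
    have h1 : (M:ℝ) + 1 ≤ (g n₁:ℝ) + 1 := by
      have h2 : M < n₁ := lt_of_le_of_lt (le_max_right _ _) hn₁
      have h3 : n₁ ≤ g n₁ := hg.le_apply
      have : (M:ℝ) ≤ (g n₁ : ℝ) := by exact_mod_cast le_trans h2.le h3
      linarith
    calc 1/((g n₁:ℝ)+1) ≤ 1/((M:ℝ)+1) := by
          apply one_div_le_one_div_of_le (by positivity) h1
      _ < η/4 := hM
  have hd1 : 1/((g n₁ : ℝ)+1) ≤ 1 := by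
    rw [div_le_one (by positivity)]
    have : (0:ℝ) ≤ (g n₁ : ℝ) := Nat.cast_nonneg _
    linarith
  -- abbreviations
  have f1 : (∑ s, lam (g n₁) s * φ (α (g n₁)) s)
      - (⨅ α' : Fin m → ℝ, ∑ s, lam (g n₁) s * φ α' s) < 1/((g n₁ : ℝ)+1) := hA (g n₁)
  have f2 : (⨅ α' : Fin m → ℝ, ∑ s, lam (g n₁) s * φ α' s) ≤ C :=
    hPinfle _ (h0 _) (h1 _)
  have f3 : ∑ s, lam (g n₁) s * φ (α (g n₁)) s < C + 1 := by linarith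
  have f4 : ∀ s ∈ D, φ (α (g n₁)) s ≤ K := by
    intro s hs
    have hμs : lmin/2 ≤ lam (g n₁) s := by
      have h₁ := abs_le.mp (heb n₁ s)
      have h₂ := hlmin_le s hs
      have hθ1 : θ ≤ lmin/2 := min_le_left _ _
      linarith [h₁.1]
    have h5 : lam (g n₁) s * φ (α (g n₁)) s ≤ ∑ t, lam (g n₁) t * φ (α (g n₁)) t :=
      Finset.single_le_sum (f := fun t => lam (g n₁) t * φ (α (g n₁)) t)
        (fun t _ => mul_nonneg (h0 _ t) (hφ _ t)) (mem_univ s)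
    rw [hKdef, le_div_iff₀ (by positivity)]
    have hx : φ (α (g n₁)) s * (lmin/2) ≤ φ (α (g n₁)) s * lam (g n₁) s :=
      mul_le_mul_of_nonneg_left hμs (hφ _ s)
    nlinarith
  have f5 : ∑ s, lamS s * φ (α (g n₁)) s
      ≤ (∑ s, lam (g n₁) s * φ (α (g n₁)) s) + K * e n₁ := by
    have hpt : ∀ s ∈ univ, lamS s * φ (α (g n₁)) s
        ≤ lam (g n₁) s * φ (α (g n₁)) s + K * |lam (g n₁) s - lamS s| := by
      intro s _
      by_cases hs : s ∈ D
      · have hφK := f4 s hs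
        have h1 : lamS s - lam (g n₁) s ≤ |lam (g n₁) s - lamS s| := by
          rw [abs_sub_comm]; exact le_abs_self _
        nlinarith [hφ (α (g n₁)) s, abs_nonneg (lam (g n₁) s - lamS s)]
      · have hz : lamS s = 0 := by
          have := (mem_filter.not.mp hs)
          push_neg at this
          exact le_antisymm (this (mem_univ s)) (hlamS0 s)
        rw [hz, zero_mul]
        exact add_nonneg (mul_nonneg (h0 _ s) (hφ _ s)) (mul_nonneg hK (abs_nonneg _))
    calc ∑ s, lamS s * φ (α (g n₁)) s
        ≤ ∑ s, (lam (g n₁) s * φ (α (g n₁)) s + K * |lam (g n₁) s - lamS s|) :=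
          Finset.sum_le_sum hpt
      _ = (∑ s, lam (g n₁) s * φ (α (g n₁)) s) + K * e n₁ := by
          rw [Finset.sum_add_distrib, ← Finset.mul_sum]
  have f6a : (⨅ α' : Fin m → ℝ, ∑ s, lam (g n₁) s * φ α' s) ≤ ∑ s, lam (g n₁) s * φ γ s :=
    ciInf_le (hbddφ _ (h0 _)) γ
  have f6b : ∑ s, lam (g n₁) s * φ γ s ≤ (∑ s, lamS s * φ γ s) + C' * e n₁ := by
    have hpt : ∀ s ∈ univ, lam (g n₁) s * φ γ s
        ≤ lamS s * φ γ s + C' * |lam (g n₁) s - lamS s| := by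
      intro s _
      have h1 : lam (g n₁) s - lamS s ≤ |lam (g n₁) s - lamS s| := le_abs_self _
      nlinarith [hC's s, hφ γ s, abs_nonneg (lam (g n₁) s - lamS s)]
    calc ∑ s, lam (g n₁) s * φ γ s
        ≤ ∑ s, (lamS s * φ γ s + C' * |lam (g n₁) s - lamS s|) := Finset.sum_le_sum hpt
      _ = (∑ s, lamS s * φ γ s) + C' * e n₁ := by
          rw [Finset.sum_add_distrib, ← Finset.mul_sum]
  have f7 : ∑ s, lamS s * φ γ s < Pst + η/4 := hγ
  have f8 : c ≤ ∑ s, lamS s * φ (α (g n₁)) s := hc2 _ (hnonmin n₁ hn₁I)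
  have hθ2 : θ ≤ η/(4*(C'+K+1)) := min_le_right _ _
  have hmul : (C'+K+1)*θ ≤ η/4 := by
    calc (C'+K+1)*θ ≤ (C'+K+1)*(η/(4*(C'+K+1))) :=
          mul_le_mul_of_nonneg_left hθ2 (by positivity)
      _ = η/4 := by field_simp
  have hee : C' * e n₁ + K * e n₁ ≤ (C'+K+1)*θ := by
    have h1 : (C'+K+1)*(e n₁) ≤ (C'+K+1)*θ :=
      mul_le_mul_of_nonneg_left hek.le (by positivity)
    nlinarith [henn n₁]
  have : c < c := by
    have : c < Pst + η := by linarith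
    simpa [hη'] using this
  exact lt_irrefl _ this
end

section
/- Conversely to structure consistency: with S finite and L taking finitely many values, if there exists a probability measure λ on S such that inf_α ℓ_φ(α,λ) = inf { ℓ_φ(α,λ) : α ∉ argmin_{α'} ℓ(α',λ) } (i.e., φ is not structure-consistent at λ), then there exists a sequence α_n with ℓ_φ(α_n,λ) → inf_α ℓ_φ(α,λ) but lim inf_n ℓ(α_n,λ) > inf_α ℓ(α,λ). Hence Fisher consistency fails: surrogate-risk convergence does not imply risk convergence. -/
open Finset Filter

/-- If `φ` is not structure-consistent at the probability measure `lam` on the finite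
structure space `S` — i.e. the infimum of the conditional surrogate risk equals its
infimum over scores that do not minimize the conditional risk (expressed here by the
existence, for each `n`, of a non-minimizer of the risk whose surrogate risk is within
`1/(n+1)` of the overall infimum) — then there is a sequence `A n` whose surrogate risk
converges to the optimal surrogate risk while its risk stays bounded away from the
optimal risk: Fisher consistency fails. -/
theorem not_structure_consistent_implies_not_fisher_consistent
    (m : ℕ) (S : Type*) [Fintype S]
    (L φ : (Fin m → ℝ) → S → ℝ)
    (hL : ∀ α s, L α s ∈ Set.Icc (0 : ℝ) 1)
    (hLfin : (Set.range (Function.uncurry L)).Finite)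
    (hφ : ∀ α s, 0 ≤ φ α s)
    (lam : S → ℝ) (hlam0 : ∀ s, 0 ≤ lam s) (hlam1 : ∑ s, lam s = 1)
    (hmin : ∃ α : Fin m → ℝ, ∀ β : Fin m → ℝ,
      ∑ s, lam s * L α s ≤ ∑ s, lam s * L β s)
    (hNSC : ∀ n : ℕ, ∃ α : Fin m → ℝ,
      ¬ (∀ β : Fin m → ℝ, ∑ s, lam s * L α s ≤ ∑ s, lam s * L β s) ∧
      ∑ s, lam s * φ α s < (⨅ α' : Fin m → ℝ, ∑ s, lam s * φ α' s) + 1 / (n + 1)) :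
    ∃ A : ℕ → Fin m → ℝ,
      Tendsto (fun n => ∑ s, lam s * φ (A n) s) atTop
        (nhds (⨅ α' : Fin m → ℝ, ∑ s, lam s * φ α' s)) ∧
      (⨅ α' : Fin m → ℝ, ∑ s, lam s * L α' s) <
        liminf (fun n => ∑ s, lam s * L (A n) s) atTop := by
  classical
  set f : (Fin m → ℝ) → ℝ := fun α => ∑ s, lam s * φ α s with hf
  set g : (Fin m → ℝ) → ℝ := fun α => ∑ s, lam s * L α s with hg
  choose A hA1 hA2 using hNSC
  refine ⟨A, ?_, ?_⟩
  · -- surrogate risk converges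
    have hf0 : ∀ α, 0 ≤ f α := fun α =>
      Finset.sum_nonneg fun s _ => mul_nonneg (hlam0 s) (hφ α s)
    have hbdd : BddBelow (Set.range f) := ⟨0, by rintro _ ⟨α, rfl⟩; exact hf0 α⟩
    have hlow : ∀ n, (⨅ α' : Fin m → ℝ, f α') ≤ f (A n) := fun n => ciInf_le hbdd (A n)
    have hup : ∀ n : ℕ, f (A n) ≤ (⨅ α' : Fin m → ℝ, f α') + 1 / (n + 1) :=
      fun n => (hA2 n).le
    have htend : Tendsto (fun n : ℕ => (⨅ α' : Fin m → ℝ, f α') + 1 / (n + 1)) atTop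
        (nhds (⨅ α' : Fin m → ℝ, f α')) := by
      have := (tendsto_one_div_add_atTop_nhds_zero_nat :
        Tendsto (fun n : ℕ => 1 / ((n : ℝ) + 1)) atTop (nhds 0))
      have h := (tendsto_const_nhds (x := (⨅ α' : Fin m → ℝ, f α')) (f := atTop)).add this
      simpa using h
    exact tendsto_of_tendsto_of_tendsto_of_le_of_le tendsto_const_nhds htend hlow hup
  · -- risk stays bounded away
    obtain ⟨αm, hαm⟩ := hmin
    have hg0 : ∀ α, 0 ≤ g α := fun α =>
      Finset.sum_nonneg fun s _ => mul_nonneg (hlam0 s) (hL α s).1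
    have hg1 : ∀ α, g α ≤ 1 := by
      intro α
      calc g α ≤ ∑ s, lam s * 1 := Finset.sum_le_sum fun s _ =>
            mul_le_mul_of_nonneg_left (hL α s).2 (hlam0 s)
        _ = 1 := by simpa using hlam1
    have hbddg : BddBelow (Set.range g) := ⟨0, by rintro _ ⟨α, rfl⟩; exact hg0 α⟩
    have hinf : (⨅ α' : Fin m → ℝ, g α') = g αm :=
      le_antisymm (ciInf_le hbddg αm) (le_ciInf hαm)
    -- finite range of g
    have hrange : (Set.range g).Finite := by
      have hpi : {h : S → ℝ | ∀ s, h s ∈ Set.range (Function.uncurry L)}.Finite := by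
        have := Set.Finite.pi (fun _ : S => hLfin)
        simpa [Set.pi, Set.mem_univ] using this
      have : Set.range g ⊆ (fun h : S → ℝ => ∑ s, lam s * h s) ''
          {h : S → ℝ | ∀ s, h s ∈ Set.range (Function.uncurry L)} := by
        rintro _ ⟨α, rfl⟩
        exact ⟨fun s => L α s, fun s => ⟨(α, s), rfl⟩, rfl⟩
      exact (hpi.image _).subset this
    -- each A n is strictly above the min
    have hAn : ∀ n, g αm < g (A n) := by
      intro n
      rcases not_forall.mp (hA1 n) with ⟨β, hβ⟩
      exact lt_of_le_of_lt (hαm β) (lt_of_not_ge hβ)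
    -- the minimal value strictly above the min
    set V : Set ℝ := Set.range g ∩ Set.Ioi (g αm) with hV
    have hVfin : V.Finite := hrange.inter_of_left _
    have hVne : V.Nonempty := ⟨g (A 0), ⟨A 0, rfl⟩, hAn 0⟩
    have hcmem : sInf V ∈ V := hVne.csInf_mem hVfin
    have hcle : ∀ n, sInf V ≤ g (A n) := fun n =>
      csInf_le hVfin.bddBelow ⟨⟨A n, rfl⟩, hAn n⟩
    have hcgt : g αm < sInf V := hcmem.2
    have hbound : IsBoundedUnder (· ≤ ·) atTop (fun n => g (A n)) :=
      ⟨1, Filter.eventually_atTop.mpr ⟨0, fun n _ => hg1 (A n)⟩⟩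
    have hlim : sInf V ≤ liminf (fun n => g (A n)) atTop :=
      le_liminf_of_le hbound.isCoboundedUnder_ge
        (Filter.Eventually.of_forall hcle)
    calc (⨅ α' : Fin m → ℝ, g α') = g αm := hinf
      _ < sInf V := hcgt
      _ ≤ _ := hlim
end

section
/- Consistency of the difference-weighted pairwise surrogate in the acyclic case: let s ∈ ℝ^{m×m} be a nonnegative matrix whose difference graph (edge i→j present with weight s_{ij} - s_{ji} when s_{ij} > s_{ji}) is acyclic, and let φ : ℝ → ℝ≥0 be convex, nonincreasing, differentiable with φ'(0) < 0. Define Φ(α) = Σ_{i,j} max{s_{ij} - s_{ji}, 0} φ(α_i - α_j). Then every minimizer α* of Φ satisfies α*_i > α*_j whenever s_{ij} > s_{ji}; consequently every minimizer of Φ minimizes the pairwise loss L(α) = Σ_{i<j} s_{ij} 1{α_i ≤ α_j} + Σ_{i>j} s_{ij} 1{α_i < α_j}. -/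
open Finset

/-- The pairwise 0–1 loss
`L(α) = ∑_{i<j} s_{ij} 1{α_i ≤ α_j} + ∑_{i>j} s_{ij} 1{α_i < α_j}`. -/
noncomputable def pairwiseLoss (m : ℕ) (s : Matrix (Fin m) (Fin m) ℝ)
    (α : Fin m → ℝ) : ℝ :=
  ∑ i, ∑ j,
    if i < j then (if α i ≤ α j then s i j else 0)
    else if j < i then (if α i < α j then s i j else 0) else 0

/-- The difference-weighted pairwise surrogate
`Φ(α) = ∑_{i,j} max{s_{ij} - s_{ji}, 0} φ(α_i - α_j)`. -/
noncomputable def diffWeightedSurrogate (m : ℕ) (s : Matrix (Fin m) (Fin m) ℝ)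
    (φ : ℝ → ℝ) (α : Fin m → ℝ) : ℝ :=
  ∑ i, ∑ j, max (s i j - s j i) 0 * φ (α i - α j)

private lemma exists_val_lt_of_deriv_neg (φ : ℝ → ℝ) (hdiff : Differentiable ℝ φ)
    (h : deriv φ 0 < 0) : ∃ x, φ x < φ 0 := by
  have h1 : Filter.Tendsto (slope φ 0) (nhdsWithin 0 {(0:ℝ)}ᶜ) (nhds (deriv φ 0)) :=
    hasDerivAt_iff_tendsto_slope.mp (hdiff 0).hasDerivAt
  have h2 : ∀ᶠ x in nhdsWithin 0 {(0:ℝ)}ᶜ, slope φ 0 x < 0 :=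
    h1.eventually_lt_const h
  have h3 : ∀ᶠ x in nhdsWithin 0 (Set.Ioi 0), slope φ 0 x < 0 :=
    h2.filter_mono (nhdsWithin_mono 0 (fun x hx => ne_of_gt hx))
  obtain ⟨x, hx1, hx2⟩ := (h3.and self_mem_nhdsWithin).exists
  have hx2' : (0:ℝ) < x := hx2
  have hsl : (φ x - φ 0) / (x - 0) < 0 := by rwa [slope_def_field] at hx1
  rw [sub_zero] at hsl
  rcases div_neg_iff.mp hsl with ⟨_, hb⟩ | ⟨ha, _⟩
  · linarith
  · exact ⟨x, by linarith⟩

private lemma double_sum_pairs (m : ℕ) (a : Fin m → Fin m → ℝ) (hdiag : ∀ i, a i i = 0) :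
    ∑ i, ∑ j, a i j = ∑ i, ∑ j, if i < j then a i j + a j i else 0 := by
  have key : ∀ i j : Fin m,
      a i j = (if i < j then a i j else 0) + (if j < i then a i j else 0) := by
    intro i j
    rcases lt_trichotomy i j with h | h | h
    · simp [h, not_lt_of_gt h]
    · subst h; simp [hdiag]
    · simp [h, not_lt_of_gt h]
  calc ∑ i, ∑ j, a i j
      = ∑ i, ∑ j, ((if i < j then a i j else 0) + (if j < i then a i j else 0)) := by
        simp_rw [← key]
    _ = (∑ i, ∑ j, if i < j then a i j else 0) + (∑ i, ∑ j, if j < i then a i j else 0) := by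
        simp [Finset.sum_add_distrib]
    _ = (∑ i, ∑ j, if i < j then a i j else 0) + (∑ i, ∑ j, if i < j then a j i else 0) := by
        congr 1
        rw [Finset.sum_comm]
    _ = ∑ i, ∑ j, if i < j then a i j + a j i else 0 := by
        rw [← Finset.sum_add_distrib]
        refine Finset.sum_congr rfl fun i _ => ?_
        rw [← Finset.sum_add_distrib]
        refine Finset.sum_congr rfl fun j _ => ?_
        split_ifs <;> simp


/-- Consistency of the difference-weighted pairwise surrogate in the acyclic case:
if the difference graph (edge `i → j` when `s i j > s j i`) is acyclic (its transitive
closure is irreflexive), and `φ` is convex, nonincreasing, differentiable with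
`φ'(0) < 0`, then every minimizer of the surrogate orders `α i > α j` on every edge
`i → j`, and consequently minimizes the pairwise 0–1 loss. -/
theorem diff_weighted_surrogate_consistent (m : ℕ)
    (s : Matrix (Fin m) (Fin m) ℝ) (hs : ∀ i j, 0 ≤ s i j)
    (hacyc : Irreflexive (Relation.TransGen fun i j : Fin m => s j i < s i j))
    (φ : ℝ → ℝ) (hconv : ConvexOn ℝ Set.univ φ) (hanti : Antitone φ)
    (hφ0 : ∀ x, 0 ≤ φ x) (hdiff : Differentiable ℝ φ) (hderiv : deriv φ 0 < 0) :
    ∀ α : Fin m → ℝ,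
      (∀ β : Fin m → ℝ, diffWeightedSurrogate m s φ α ≤ diffWeightedSurrogate m s φ β) →
      (∀ i j, s j i < s i j → α j < α i) ∧
      (∀ β : Fin m → ℝ, pairwiseLoss m s α ≤ pairwiseLoss m s β) := by
  classical
  intro α hα
  set r : Fin m → Fin m → Prop := fun i j => s j i < s i j with hrdef
  -- a "rank" function compatible with the DAG
  set σ : Fin m → ℕ := fun i => (univ.filter fun k => Relation.TransGen r i k).card with hσdef
  have hσ : ∀ i j, r i j → σ j < σ i := by
    intro i j hij
    apply Finset.card_lt_card
    constructor
    · intro k hk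
      simp only [Finset.mem_filter, Finset.mem_univ, true_and] at hk ⊢
      exact Relation.TransGen.head hij hk
    · intro hsub
      have hj : j ∈ univ.filter fun k => Relation.TransGen r i k := by
        simp only [Finset.mem_filter, Finset.mem_univ, true_and]
        exact Relation.TransGen.single hij
      have := hsub hj
      simp only [Finset.mem_filter, Finset.mem_univ, true_and] at this
      exact hacyc j this
  -- infimum of φ
  have hbdd : BddBelow (Set.range φ) := ⟨0, by rintro y ⟨x, rfl⟩; exact hφ0 x⟩
  set c : ℝ := ⨅ x, φ x with hcdef
  have hcle : ∀ x, c ≤ φ x := fun x => ciInf_le hbdd x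
  have hc0 : c < φ 0 := by
    obtain ⟨x, hx⟩ := exists_val_lt_of_deriv_neg φ hdiff hderiv
    exact lt_of_le_of_lt (hcle x) hx
  -- total weight
  set W : ℝ := ∑ i, ∑ j, max (s i j - s j i) 0 with hWdef
  have hW0 : 0 ≤ W := Finset.sum_nonneg fun i _ =>
    Finset.sum_nonneg fun j _ => le_max_right _ _
  -- Part 1
  have hkey : ∀ i j, s j i < s i j → α j < α i := by
    intro i0 j0 hedge
    by_contra hcon
    push_neg at hcon
    set w0 : ℝ := s i0 j0 - s j0 i0 with hw0def
    have hw0 : 0 < w0 := by simp only [hw0def]; linarith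
    set ε : ℝ := w0 * (φ 0 - c) / (W + 1) with hεdef
    have hε : 0 < ε := by
      apply div_pos (mul_pos hw0 (by linarith)) (by linarith)
    obtain ⟨t0, ht0⟩ : ∃ t0, φ t0 < c + ε := exists_lt_of_ciInf_lt (by linarith : c < c + ε)
    set T : ℝ := max t0 1 with hTdef
    have hT0 : 0 < T := lt_of_lt_of_le one_pos (le_max_right _ _)
    have hTt0 : t0 ≤ T := le_max_left _ _
    set β : Fin m → ℝ := fun i => T * (σ i : ℝ) with hβdef
    -- upper bound on Φ(β)
    have upper : diffWeightedSurrogate m s φ β ≤ W * (c + ε) := by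
      rw [hWdef, Finset.sum_mul]
      unfold diffWeightedSurrogate
      refine Finset.sum_le_sum fun i _ => ?_
      rw [Finset.sum_mul]
      refine Finset.sum_le_sum fun j _ => ?_
      rcases le_or_gt (s i j) (s j i) with h | h
      · rw [max_eq_right (by linarith)]
        simp
      · have hedgeij : r i j := h
        have hσij : σ j < σ i := hσ _ _ hedgeij
        have h1 : (1 : ℝ) ≤ (σ i : ℝ) - (σ j : ℝ) := by
          have : σ j + 1 ≤ σ i := hσij
          have := (Nat.cast_le (α := ℝ)).mpr this
          push_cast at this
          linarith
        have hdiffβ : t0 ≤ β i - β j := by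
          have : T * 1 ≤ T * ((σ i : ℝ) - (σ j : ℝ)) :=
            mul_le_mul_of_nonneg_left h1 hT0.le
          have h2 : β i - β j = T * ((σ i : ℝ) - (σ j : ℝ)) := by ring
          rw [h2]; linarith
        have hφβ : φ (β i - β j) ≤ c + ε := le_of_lt (lt_of_le_of_lt (hanti hdiffβ) ht0)
        exact mul_le_mul_of_nonneg_left hφβ (le_max_right _ _)
    -- lower bound on Φ(α)
    have lower : W * c + w0 * (φ 0 - c) ≤ diffWeightedSurrogate m s φ α := by
      have hrw : diffWeightedSurrogate m s φ α =
          ∑ p ∈ univ ×ˢ (univ : Finset (Fin m)),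
            max (s p.1 p.2 - s p.2 p.1) 0 * φ (α p.1 - α p.2) := by
        rw [Finset.sum_product]
        rfl
      have hrwW : W = ∑ p ∈ univ ×ˢ (univ : Finset (Fin m)),
          max (s p.1 p.2 - s p.2 p.1) 0 := by
        rw [Finset.sum_product]
      rw [hrw]
      have step : ∑ p ∈ univ ×ˢ (univ : Finset (Fin m)),
          (max (s p.1 p.2 - s p.2 p.1) 0 * c +
            (if p = (i0, j0) then w0 * (φ 0 - c) else 0)) ≤
          ∑ p ∈ univ ×ˢ (univ : Finset (Fin m)),
            max (s p.1 p.2 - s p.2 p.1) 0 * φ (α p.1 - α p.2) := by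
        refine Finset.sum_le_sum fun p _ => ?_
        by_cases hp : p = (i0, j0)
        · subst hp
          rw [if_pos rfl]
          have hmax : max (s i0 j0 - s j0 i0) 0 = w0 := max_eq_left (by linarith)
          simp only [hmax]
          have hφge : φ 0 ≤ φ (α i0 - α j0) := hanti (by linarith)
          nlinarith [hw0]
        · simp only [if_neg hp, add_zero]
          exact mul_le_mul_of_nonneg_left (hcle _) (le_max_right _ _)
      calc W * c + w0 * (φ 0 - c)
          = (∑ p ∈ univ ×ˢ (univ : Finset (Fin m)),
              max (s p.1 p.2 - s p.2 p.1) 0 * c) +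
            (∑ p ∈ univ ×ˢ (univ : Finset (Fin m)),
              if p = (i0, j0) then w0 * (φ 0 - c) else 0) := by
            rw [← Finset.sum_mul, ← hrwW, Finset.sum_ite_eq' (univ ×ˢ univ) (i0, j0)]
            simp
        _ = ∑ p ∈ univ ×ˢ (univ : Finset (Fin m)),
            (max (s p.1 p.2 - s p.2 p.1) 0 * c +
              (if p = (i0, j0) then w0 * (φ 0 - c) else 0)) := by
            rw [Finset.sum_add_distrib]
        _ ≤ _ := step
    -- contradiction
    have hmin := hα β
    have hWε : W * ε < w0 * (φ 0 - c) := by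
      have h1 : W * ε < (W + 1) * ε := by nlinarith
      have h2 : (W + 1) * ε = w0 * (φ 0 - c) := by
        rw [hεdef]
        field_simp
      linarith
    nlinarith [lower, upper, hmin]
  refine ⟨hkey, ?_⟩
  -- Part 2
  intro β
  have hL : ∀ γ : Fin m → ℝ, pairwiseLoss m s γ =
      ∑ i, ∑ j, if i < j then
        ((if γ i ≤ γ j then s i j else 0) + (if γ j < γ i then s j i else 0)) else 0 := by
    intro γ
    unfold pairwiseLoss
    rw [double_sum_pairs m
      (fun i j => if i < j then (if γ i ≤ γ j then s i j else 0)
        else if j < i then (if γ i < γ j then s i j else 0) else 0)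
      (by intro i; simp)]
    refine Finset.sum_congr rfl fun i _ => Finset.sum_congr rfl fun j _ => ?_
    by_cases hij : i < j
    · simp [hij, not_lt_of_gt hij]
    · simp [hij]
  rw [hL α, hL β]
  refine Finset.sum_le_sum fun i _ => Finset.sum_le_sum fun j _ => ?_
  by_cases hij : i < j
  · simp only [if_pos hij]
    have hcontrib : ∀ γ : Fin m → ℝ,
        (if γ i ≤ γ j then s i j else 0) + (if γ j < γ i then s j i else 0) =
        if γ i ≤ γ j then s i j else s j i := by
      intro γ
      rcases le_or_gt (γ i) (γ j) with h | h
      · simp [h, not_lt.mpr h]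
      · simp [not_le.mpr h, h]
    rw [hcontrib α, hcontrib β]
    rcases lt_trichotomy (s i j) (s j i) with h | h | h
    · have hαij : α i < α j := hkey j i h
      rw [if_pos hαij.le]
      split_ifs <;> linarith
    · split_ifs <;> linarith
    · have hαji : α j < α i := hkey i j h
      rw [if_neg (not_le.mpr hαji)]
      split_ifs <;> linarith
  · simp [hij]
end

section
/- Suboptimality function positivity implies Fisher consistency (finite-range risk): suppose the conditional risk ℓ(·, λ_q) has finite range for each query q and the suboptimality function H(ε, λ) = inf_α { ℓ_φ(α,λ) - inf_{α'}ℓ_φ(α',λ) : ℓ(α,λ) - inf_{α'}ℓ(α',λ) ≥ ε } satisfies H(ε, λ_q) > 0 for all ε > 0 and all q with p_q > 0. Then for any sequence of measurable scoring functions f_n with R_φ(f_n) → R_φ* := inf_f R_φ(f), we have R(f_n) → R* := inf_f R(f), where R(f) = Σ_q p_q ℓ(f(q), λ_q) and R_φ(f) = Σ_q p_q ℓ_φ(f(q), λ_q). -/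
open MeasureTheory Filter

/-- Positivity of the suboptimality function implies Fisher consistency when the
conditional risk has finite range: queries are indexed by `ℕ` with probabilities `p q`,
`lam q` is the limiting structure distribution for query `q`, the target loss `L` takes
values in `[0,1]`, the surrogate `φ` is nonnegative and integrable, each conditional
risk `α ↦ ∫ L α d(lam q)` has finite range, and for every query with `p q > 0` the
suboptimality function is positive: risk suboptimality `≥ ε` forces surrogate-risk
suboptimality `≥ δ(ε, q) > 0`. Then surrogate-risk convergence
`R_φ(f n) → inf R_φ` implies risk convergence `R(f n) → inf R`. -/
theorem suboptimality_positive_implies_fisher_consistency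
    (m : ℕ) (S : Type*) [MeasurableSpace S]
    (lam : ℕ → Measure S) (hlam : ∀ q, IsProbabilityMeasure (lam q))
    (p : ℕ → ℝ) (hp0 : ∀ q, 0 ≤ p q) (hpsum : Summable p) (hp1 : (∑' q, p q) = 1)
    (L : (Fin m → ℝ) → S → ℝ)
    (hLm : ∀ α, Measurable (L α)) (hL01 : ∀ α s, L α s ∈ Set.Icc (0 : ℝ) 1)
    (φ : (Fin m → ℝ) → S → ℝ)
    (hφ0 : ∀ α s, 0 ≤ φ α s) (hφint : ∀ α q, Integrable (φ α) (lam q))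
    (hfin : ∀ q, (Set.range fun α : Fin m → ℝ => ∫ s, L α s ∂lam q).Finite)
    (hH : ∀ q : ℕ, 0 < p q → ∀ ε > (0 : ℝ), ∃ δ > (0 : ℝ), ∀ α : Fin m → ℝ,
      ε ≤ (∫ s, L α s ∂lam q) - (⨅ α' : Fin m → ℝ, ∫ s, L α' s ∂lam q) →
      δ ≤ (∫ s, φ α s ∂lam q) - (⨅ α' : Fin m → ℝ, ∫ s, φ α' s ∂lam q))
    (f : ℕ → ℕ → Fin m → ℝ)
    (hRφsummable : ∀ n, Summable fun q => p q * ∫ s, φ (f n q) s ∂lam q)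
    (hconv : Tendsto (fun n => ∑' q, p q * ∫ s, φ (f n q) s ∂lam q) atTop
      (nhds (⨅ g : ℕ → Fin m → ℝ, ∑' q, p q * ∫ s, φ (g q) s ∂lam q))) :
    Tendsto (fun n => ∑' q, p q * ∫ s, L (f n q) s ∂lam q) atTop
      (nhds (⨅ g : ℕ → Fin m → ℝ, ∑' q, p q * ∫ s, L (g q) s ∂lam q)) := by
  classical
  set ℓ : ℕ → (Fin m → ℝ) → ℝ := fun q α => ∫ s, L α s ∂lam q with hℓdef
  set ℓφ : ℕ → (Fin m → ℝ) → ℝ := fun q α => ∫ s, φ α s ∂lam q with hℓφdef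
  set I : ℕ → ℝ := fun q => ⨅ α, ℓ q α with hIdef
  set Iφ : ℕ → ℝ := fun q => ⨅ α, ℓφ q α with hIφdef
  have hℓ0 : ∀ q α, 0 ≤ ℓ q α := fun q α =>
    integral_nonneg fun s => (hL01 α s).1
  have hℓ1 : ∀ q α, ℓ q α ≤ 1 := by
    intro q α
    have hint : Integrable (L α) (lam q) :=
      (integrable_const (1 : ℝ)).mono' (hLm α).aestronglyMeasurable
        (Filter.Eventually.of_forall fun s => by
          rw [Real.norm_eq_abs, abs_of_nonneg (hL01 α s).1]; exact (hL01 α s).2)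
    calc ℓ q α ≤ ∫ _ : S, (1 : ℝ) ∂lam q :=
          integral_mono hint (integrable_const 1) fun s => (hL01 α s).2
      _ = 1 := by simp
  have hℓφ0 : ∀ q α, 0 ≤ ℓφ q α := fun q α =>
    integral_nonneg fun s => hφ0 α s
  have hbddℓ : ∀ q, BddBelow (Set.range (ℓ q)) :=
    fun q => ⟨0, by rintro x ⟨α, rfl⟩; exact hℓ0 q α⟩
  have hbddℓφ : ∀ q, BddBelow (Set.range (ℓφ q)) :=
    fun q => ⟨0, by rintro x ⟨α, rfl⟩; exact hℓφ0 q α⟩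
  have hI0 : ∀ q, 0 ≤ I q := fun q => le_ciInf fun α => hℓ0 q α
  have hI1 : ∀ q, I q ≤ 1 := fun q =>
    (ciInf_le (hbddℓ q) (fun _ => 0)).trans (hℓ1 q _)
  have hIle : ∀ q α, I q ≤ ℓ q α := fun q α => ciInf_le (hbddℓ q) α
  have hIφ0 : ∀ q, 0 ≤ Iφ q := fun q => le_ciInf fun α => hℓφ0 q α
  have hIφle : ∀ q α, Iφ q ≤ ℓφ q α := fun q α => ciInf_le (hbddℓφ q) α
  -- summability facts
  have hSIφ : Summable fun q => p q * Iφ q :=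
    Summable.of_nonneg_of_le (fun q => mul_nonneg (hp0 q) (hIφ0 q))
      (fun q => mul_le_mul_of_nonneg_left (hIφle q (f 0 q)) (hp0 q)) (hRφsummable 0)
  have hSI : Summable fun q => p q * I q :=
    Summable.of_nonneg_of_le (fun q => mul_nonneg (hp0 q) (hI0 q))
      (fun q => by simpa using mul_le_mul_of_nonneg_left (hI1 q) (hp0 q)) hpsum
  have hSL : ∀ g : ℕ → Fin m → ℝ, Summable fun q => p q * ℓ q (g q) := fun g =>
    Summable.of_nonneg_of_le (fun q => mul_nonneg (hp0 q) (hℓ0 q _))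
      (fun q => by simpa using mul_le_mul_of_nonneg_left (hℓ1 q (g q)) (hp0 q)) hpsum
  set Sφ : ℝ := ∑' q, p q * Iφ q with hSφdef
  set Rφs : ℝ := ⨅ g : ℕ → Fin m → ℝ, ∑' q, p q * ℓφ q (g q) with hRφsdef
  -- Rφ* ≤ Sφ
  have hbddRφ : BddBelow (Set.range fun g : ℕ → Fin m → ℝ => ∑' q, p q * ℓφ q (g q)) := by
    refine ⟨0, ?_⟩
    rintro x ⟨g, rfl⟩
    exact tsum_nonneg fun q => mul_nonneg (hp0 q) (hℓφ0 q _)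
  have hRφs_le : Rφs ≤ Sφ := by
    refine le_of_forall_pos_le_add fun ε hε => ?_
    have hex : ∀ q, ∃ α, ℓφ q α < Iφ q + ε := fun q =>
      exists_lt_of_ciInf_lt (lt_add_of_pos_right _ hε)
    choose g hg using hex
    have hsum2 : Summable fun q => p q * (Iφ q + ε) := by
      have := hSIφ.add (hpsum.mul_right ε)
      simpa [mul_add] using this
    have hsum1 : Summable fun q => p q * ℓφ q (g q) :=
      Summable.of_nonneg_of_le (fun q => mul_nonneg (hp0 q) (hℓφ0 q _))
        (fun q => mul_le_mul_of_nonneg_left (hg q).le (hp0 q)) hsum2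
    calc Rφs ≤ ∑' q, p q * ℓφ q (g q) := ciInf_le hbddRφ g
      _ ≤ ∑' q, p q * (Iφ q + ε) :=
          Summable.tsum_le_tsum (fun q => mul_le_mul_of_nonneg_left (hg q).le (hp0 q)) hsum1 hsum2
      _ = Sφ + ε := by
          rw [show (fun q => p q * (Iφ q + ε)) = fun q => p q * Iφ q + p q * ε by
            funext q; ring]
          rw [Summable.tsum_add hSIφ (hpsum.mul_right ε), tsum_mul_right, hp1, one_mul]
  -- per-query surrogate suboptimality → 0
  have hsurr : ∀ q₀, 0 < p q₀ →
      Tendsto (fun n => ℓφ q₀ (f n q₀) - Iφ q₀) atTop (nhds 0) := by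
    intro q₀ hq₀
    have hub : ∀ n, ℓφ q₀ (f n q₀) - Iφ q₀ ≤
        ((∑' q, p q * ℓφ q (f n q)) - Sφ) / p q₀ := by
      intro n
      rw [le_div_iff₀ hq₀]
      have hsub : Summable fun q => p q * ℓφ q (f n q) - p q * Iφ q :=
        (hRφsummable n).sub hSIφ
      have : (∑' q, p q * ℓφ q (f n q)) - Sφ
          = ∑' q, (p q * ℓφ q (f n q) - p q * Iφ q) := by
        rw [Summable.tsum_sub (hRφsummable n) hSIφ]
      rw [this]
      have hterm : p q₀ * ℓφ q₀ (f n q₀) - p q₀ * Iφ q₀ ≤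
          ∑' q, (p q * ℓφ q (f n q) - p q * Iφ q) :=
        Summable.le_tsum hsub q₀ fun q _ =>
          sub_nonneg.2 (mul_le_mul_of_nonneg_left (hIφle q _) (hp0 q))
      nlinarith [hterm]
    have hlim : Tendsto (fun n => ((∑' q, p q * ℓφ q (f n q)) - Sφ) / p q₀)
        atTop (nhds ((Rφs - Sφ) / p q₀)) :=
      (hconv.sub_const Sφ).div_const _
    have hc : (Rφs - Sφ) / p q₀ ≤ 0 :=
      div_nonpos_iff.2 (Or.inr ⟨sub_nonpos.2 hRφs_le, hq₀.le⟩)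
    have hmax : Tendsto (fun n => max (((∑' q, p q * ℓφ q (f n q)) - Sφ) / p q₀) 0)
        atTop (nhds 0) := by
      have := hlim.max (tendsto_const_nhds : Tendsto (fun _ : ℕ => (0:ℝ)) atTop (nhds 0))
      rwa [max_eq_right hc] at this
    refine tendsto_of_tendsto_of_tendsto_of_le_of_le
      (tendsto_const_nhds : Tendsto (fun _ : ℕ => (0:ℝ)) atTop (nhds 0)) hmax
      (fun n => sub_nonneg.2 (hIφle q₀ _)) (fun n => le_max_of_le_left (hub n))
  -- per-query target risk convergence
  have htarget : ∀ q, Tendsto (fun n => p q * ℓ q (f n q)) atTop (nhds (p q * I q)) := by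
    intro q
    rcases (hp0 q).eq_or_lt with h | hq
    · simp [← h]
    · refine Tendsto.const_mul _ ?_
      rw [Metric.tendsto_atTop]
      intro ε hε
      obtain ⟨δ, hδ, hδle⟩ := hH q hq ε hε
      have := (hsurr q hq).eventually (eventually_lt_nhds hδ)
      obtain ⟨N, hN⟩ := (Filter.eventually_atTop).1 this
      refine ⟨N, fun n hn => ?_⟩
      have h1 : ℓ q (f n q) - I q < ε := by
        by_contra hcon
        push_neg at hcon
        exact absurd (hδle (f n q) hcon) (not_le.2 (hN n hn))
      rw [Real.dist_eq, abs_of_nonneg (sub_nonneg.2 (hIle q _))]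
      exact h1
  -- identify the infimum of the target risk
  set SL : ℝ := ∑' q, p q * I q with hSLdef
  have hinf_eq : (⨅ g : ℕ → Fin m → ℝ, ∑' q, p q * ℓ q (g q)) = SL := by
    apply le_antisymm
    · refine le_of_forall_pos_le_add fun ε hε => ?_
      have hex : ∀ q, ∃ α, ℓ q α < I q + ε := fun q =>
        exists_lt_of_ciInf_lt (lt_add_of_pos_right _ hε)
      choose g hg using hex
      have hsum2 : Summable fun q => p q * (I q + ε) := by
        have := hSI.add (hpsum.mul_right ε)
        simpa [mul_add] using this
      calc (⨅ g : ℕ → Fin m → ℝ, ∑' q, p q * ℓ q (g q))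
          ≤ ∑' q, p q * ℓ q (g q) := by
            refine ciInf_le ⟨0, ?_⟩ g
            rintro x ⟨g', rfl⟩
            exact tsum_nonneg fun q => mul_nonneg (hp0 q) (hℓ0 q _)
        _ ≤ ∑' q, p q * (I q + ε) :=
            Summable.tsum_le_tsum (fun q => mul_le_mul_of_nonneg_left (hg q).le (hp0 q))
              (hSL g) hsum2
        _ = SL + ε := by
            rw [show (fun q => p q * (I q + ε)) = fun q => p q * I q + p q * ε by
              funext q; ring]
            rw [Summable.tsum_add hSI (hpsum.mul_right ε), tsum_mul_right, hp1, one_mul]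
    · refine le_ciInf fun g => ?_
      exact Summable.tsum_le_tsum (fun q => mul_le_mul_of_nonneg_left (hIle q (g q)) (hp0 q))
        hSI (hSL g)
  rw [hinf_eq]
  exact tendsto_tsum_of_dominated_convergence hpsum htarget
    (Filter.Eventually.of_forall fun n q => by
      rw [Real.norm_eq_abs, abs_of_nonneg (mul_nonneg (hp0 q) (hℓ0 q _))]
      simpa using mul_le_mul_of_nonneg_left (hℓ1 q (f n q)) (hp0 q))
end
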